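/- Let A ⊆ ℝⁿ be countable, K ⊆ ℝⁿ compact with empty interior, and f : K → ℝⁿ continuous. Then for every ε > 0 there exists a polynomial mapping p : ℝⁿ → ℝⁿ such that p(x) ∉ A for all x ∈ K and max_{x ∈ K} ‖f(x) − p(x)‖ < ε. -/

import Mathlib

open Set Metric MeasureTheory MvPolynomial

noncomputable section

lemma contDiff_mv_eval {n : ℕ} (p : MvPolynomial (Fin n) ℝ) :
    ContDiff ℝ 1 fun x : Fin n → ℝ => MvPolynomial.eval x p := by
  induction p using MvPolynomial.induction_on with
  | C a => simpa using contDiff_const (c := a)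
  | add p r hp hr => simpa using hp.add hr
  | mul_X p i hp =>
      simpa using hp.mul ((ContinuousLinearMap.proj i : (Fin n → ℝ) →L[ℝ] ℝ).contDiff)

lemma contDiff_mv_evalE {n : ℕ} (q : Fin n → MvPolynomial (Fin n) ℝ) :
    ContDiff ℝ 1 fun x : EuclideanSpace ℝ (Fin n) =>
      (show EuclideanSpace ℝ (Fin n) from WithLp.toLp 2 (fun i => MvPolynomial.eval x (q i))) := by
  have h : ContDiff ℝ 1 fun x : Fin n → ℝ => fun i => MvPolynomial.eval x (q i) :=
    contDiff_pi.2 fun i => contDiff_mv_eval (q i)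
  exact ((EuclideanSpace.equiv (Fin n) ℝ).symm.contDiff.comp h).comp
    (EuclideanSpace.equiv (Fin n) ℝ).contDiff

lemma sw_approx {n : ℕ} {K : Set (EuclideanSpace ℝ (Fin n))} (hK : IsCompact K)
    (g : EuclideanSpace ℝ (Fin n) → ℝ) (hg : ContinuousOn g K) {δ : ℝ} (hδ : 0 < δ) :
    ∃ q : MvPolynomial (Fin n) ℝ, ∀ x ∈ K, |g x - MvPolynomial.eval x q| < δ := by
  haveI : CompactSpace K := isCompact_iff_compactSpace.mp hK
  set Xc : Fin n → C(K, ℝ) := fun i =>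
    ⟨fun x => (x : EuclideanSpace ℝ (Fin n)) i,
      (EuclideanSpace.proj i).continuous.comp continuous_subtype_val⟩ with hXc
  set φ : MvPolynomial (Fin n) ℝ →ₐ[ℝ] C(K, ℝ) := MvPolynomial.aeval Xc with hφ
  have key : ∀ (q : MvPolynomial (Fin n) ℝ) (x : K),
      (φ q) x = MvPolynomial.eval (fun i => (x : EuclideanSpace ℝ (Fin n)) i) q := by
    intro q x
    induction q using MvPolynomial.induction_on with
    | C a => simp [hφ]
    | add p r hp hr => simp [map_add, ContinuousMap.add_apply, hp, hr]
    | mul_X p i hp =>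
      rw [map_mul, ContinuousMap.mul_apply, hp]; simp [hφ, hXc]; exact Or.inl rfl
  have hsep : (φ.range).SeparatesPoints := by
    rintro x y hxy
    have hex : ∃ i, (x : EuclideanSpace ℝ (Fin n)) i ≠ (y : EuclideanSpace ℝ (Fin n)) i := by
      by_contra h
      push_neg at h
      exact hxy (Subtype.ext (PiLp.ext h))
    obtain ⟨i, hi⟩ := hex
    exact ⟨Xc i, ⟨φ (MvPolynomial.X i), ⟨⟨MvPolynomial.X i, rfl⟩, by simp [hφ]⟩⟩, hi⟩
  obtain ⟨⟨g', hg'⟩, hb⟩ :=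
    ContinuousMap.exists_mem_subalgebra_near_continuous_of_separatesPoints φ.range hsep
      (K.restrict g) hg.restrict δ hδ
  obtain ⟨q, rfl⟩ := hg'
  refine ⟨q, fun x hx => ?_⟩
  have h1 := hb ⟨x, hx⟩
  have h2 : (φ q) ⟨x, hx⟩ = MvPolynomial.eval x q := key q ⟨x, hx⟩
  rw [abs_sub_comm]
  have h3 : ‖(φ q) ⟨x, hx⟩ - g x‖ < δ := h1
  rw [h2] at h3
  simpa [Real.norm_eq_abs] using h3

theorem weierstrass_avoids_countable (n : ℕ)
    (A : Set (EuclideanSpace ℝ (Fin n))) (hA : A.Countable)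
    (K : Set (EuclideanSpace ℝ (Fin n))) (hK : IsCompact K) (hKi : interior K = ∅)
    (f : EuclideanSpace ℝ (Fin n) → EuclideanSpace ℝ (Fin n)) (hf : ContinuousOn f K)
    (ε : ℝ) (hε : 0 < ε) :
    ∃ p : Fin n → MvPolynomial (Fin n) ℝ,
      (∀ x ∈ K, (show EuclideanSpace ℝ (Fin n) from WithLp.toLp 2 (fun i => MvPolynomial.eval x (p i))) ∉ A) ∧
      ∀ x ∈ K,
        ‖f x - (show EuclideanSpace ℝ (Fin n) from WithLp.toLp 2 (fun i => MvPolynomial.eval x (p i)))‖ < ε := by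
  classical
  set δ : ℝ := ε / (2 * (n + 1)) with hδdef
  have hδ : 0 < δ := by positivity
  -- coordinatewise polynomial approximation
  have hcoord : ∀ i : Fin n, ∃ q : MvPolynomial (Fin n) ℝ,
      ∀ x ∈ K, |f x i - MvPolynomial.eval x q| < δ := fun i =>
    sw_approx hK (fun x => f x i) (((EuclideanSpace.proj i).continuous.comp_continuousOn hf)) hδ
  choose q hq using hcoord
  set Q : EuclideanSpace ℝ (Fin n) → EuclideanSpace ℝ (Fin n) :=
    fun x => (show EuclideanSpace ℝ (Fin n) from WithLp.toLp 2 (fun i => MvPolynomial.eval x (q i))) with hQdef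
  have hQc : ContDiff ℝ 1 Q := contDiff_mv_evalE q
  have hQapprox : ∀ x ∈ K, ‖f x - Q x‖ ≤ ε / 2 := by
    intro x hx
    have hb : ∀ i, ‖(f x - Q x) i‖ ≤ δ := by
      intro i
      have h1 : (f x - Q x) i = f x i - MvPolynomial.eval x (q i) := rfl
      rw [h1, Real.norm_eq_abs]
      exact (hq i x hx).le
    have hn1 : (0 : ℝ) < (n : ℝ) + 1 := by positivity
    have hhalf : ε / 2 = ((n : ℝ) + 1) * δ := by
      rw [hδdef]; field_simp
    rw [EuclideanSpace.norm_eq]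
    have h2 : ∑ i, ‖(f x - Q x) i‖ ^ 2 ≤ ∑ _i : Fin n, δ ^ 2 :=
      Finset.sum_le_sum fun i _ => by
        have := hb i
        nlinarith [norm_nonneg ((f x - Q x) i)]
    have h3 : (∑ _i : Fin n, δ ^ 2) = (n : ℝ) * δ ^ 2 := by
      simp [Finset.sum_const, Finset.card_univ, nsmul_eq_mul]
    calc Real.sqrt (∑ i, ‖(f x - Q x) i‖ ^ 2)
        ≤ Real.sqrt ((((n : ℝ) + 1) * δ) ^ 2) := by
          apply Real.sqrt_le_sqrt
          rw [h3] at h2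
          nlinarith [sq_nonneg δ, (Nat.cast_nonneg n : (0:ℝ) ≤ n)]
      _ = ((n : ℝ) + 1) * δ := Real.sqrt_sq (by positivity)
      _ = ε / 2 := hhalf.symm
  -- the critical set
  set Z : Set (EuclideanSpace ℝ (Fin n)) :=
    {x | ContinuousLinearMap.det (fderiv ℝ Q x) = 0} with hZdef
  have hZc : IsClosed Z :=
    isClosed_eq (ContinuousLinearMap.continuous_det.comp (hQc.continuous_fderiv one_ne_zero))
      continuous_const
  have h0int : interior (Q '' (K ∩ Z)) = ∅ := by
    have hZ0 : volume (Q '' (K ∩ Z)) = 0 :=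
      addHaar_image_eq_zero_of_det_fderivWithin_eq_zero volume
        (f' := fun x => fderiv ℝ Q x)
        (fun x _ => ((hQc.differentiable one_ne_zero) x).hasFDerivAt.hasFDerivWithinAt)
        (fun x hx => hx.2)
    rcases eq_empty_or_nonempty (interior (Q '' (K ∩ Z))) with h | h
    · exact h
    · exact absurd hZ0 (MeasureTheory.Measure.measure_pos_of_nonempty_interior volume h).ne'
  -- good radii around noncritical points
  have key : ∀ x ∈ K \ Z, ∃ r > 0, IsClosed (Q '' (K ∩ closedBall x r)) ∧
      interior (Q '' (K ∩ closedBall x r)) = ∅ := by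
    intro x hx
    have hdet' : LinearMap.det
        ((fderiv ℝ Q x : EuclideanSpace ℝ (Fin n) →L[ℝ] EuclideanSpace ℝ (Fin n)) :
          EuclideanSpace ℝ (Fin n) →ₗ[ℝ] EuclideanSpace ℝ (Fin n)) ≠ 0 := hx.2
    set e : EuclideanSpace ℝ (Fin n) ≃L[ℝ] EuclideanSpace ℝ (Fin n) :=
      (LinearMap.equivOfDetNeZero _ hdet').toContinuousLinearEquiv with he
    have hee : (e : EuclideanSpace ℝ (Fin n) →L[ℝ] EuclideanSpace ℝ (Fin n)) = fderiv ℝ Q x := by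
      exact ContinuousLinearMap.ext fun v => rfl
    have hQx : HasFDerivAt Q (e : EuclideanSpace ℝ (Fin n) →L[ℝ] EuclideanSpace ℝ (Fin n)) x := by
      rw [hee]; exact ((hQc.differentiable one_ne_zero) x).hasFDerivAt
    set ph := hQc.contDiffAt.toOpenPartialHomeomorph Q hQx one_ne_zero with hph
    have hphcoe : (ph : EuclideanSpace ℝ (Fin n) → EuclideanSpace ℝ (Fin n)) = Q := rfl
    have hsource : x ∈ ph.source := ContDiffAt.mem_toOpenPartialHomeomorph_source _ _ _
    obtain ⟨rr, hrr, hball⟩ :=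
      (Metric.nhds_basis_closedBall.mem_iff).1 (ph.open_source.mem_nhds hsource)
    refine ⟨rr, hrr, ((hK.inter_right Metric.isClosed_closedBall).image hQc.continuous).isClosed, ?_⟩
    by_contra hne
    obtain ⟨y, hy⟩ := Set.nonempty_iff_ne_empty.2 hne
    have hVsub : interior (Q '' (K ∩ closedBall x rr)) ⊆ ph.target := by
      intro z hz
      obtain ⟨w, hw, rfl⟩ := interior_subset hz
      rw [← ph.image_source_eq_target]
      exact ⟨w, hball hw.2, rfl⟩
    have hWopen : IsOpen (ph.symm '' interior (Q '' (K ∩ closedBall x rr))) :=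
      ph.symm.isOpen_image_of_subset_source isOpen_interior
        (by rw [OpenPartialHomeomorph.symm_source]; exact hVsub)
    have hWK : ph.symm '' interior (Q '' (K ∩ closedBall x rr)) ⊆ K := by
      rintro - ⟨z, hz, rfl⟩
      obtain ⟨u, hu, rfl⟩ := interior_subset hz
      have hinv : ph.symm (Q u) = u := ph.left_inv (hball hu.2)
      rw [hinv]
      exact hu.1
    have hsub2 : ph.symm '' interior (Q '' (K ∩ closedBall x rr)) ⊆ interior K :=
      interior_maximal hWK hWopen
    rw [hKi] at hsub2
    exact hsub2 ⟨y, hy, rfl⟩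
  choose! r hr0 hrclosed hrint using key
  -- countable subcover of K \ Z
  have hlin : IsLindelof (K \ Z) :=
    HereditarilyLindelof_LindelofSets (K \ Z)
  obtain ⟨T, hTsub, hTcount, hTcover⟩ :=
    hlin.elim_countable_subcover_image (b := K \ Z) (c := fun x => ball x (r x))
      (fun x _ => isOpen_ball) (fun x hx => mem_biUnion hx (mem_ball_self (hr0 x hx)))
  -- the countable family of closed nowhere dense sets covering Q '' K
  set F : Set (Set (EuclideanSpace ℝ (Fin n))) :=
    insert (Q '' (K ∩ Z)) ((fun x => Q '' (K ∩ closedBall x (r x))) '' T) with hFdef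
  have hFcount : F.Countable := (hTcount.image _).insert _
  have hFclosed : ∀ s ∈ F, IsClosed s := by
    rintro s (rfl | ⟨x, hx, rfl⟩)
    · exact ((hK.inter_right hZc).image hQc.continuous).isClosed
    · exact hrclosed x (hTsub hx)
  have hFint : ∀ s ∈ F, interior s = ∅ := by
    rintro s (rfl | ⟨x, hx, rfl⟩)
    · exact h0int
    · exact hrint x (hTsub hx)
  have hcover : Q '' K ⊆ ⋃₀ F := by
    rintro - ⟨x, hxK, rfl⟩
    by_cases hxZ : x ∈ Z
    · exact ⟨Q '' (K ∩ Z), mem_insert _ _, ⟨x, ⟨hxK, hxZ⟩, rfl⟩⟩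
    · obtain ⟨x₀, hx₀, hxball⟩ := by
        have := hTcover ⟨hxK, hxZ⟩
        simpa using this
      exact ⟨Q '' (K ∩ closedBall x₀ (r x₀)),
        mem_insert_of_mem _ ⟨x₀, hx₀, rfl⟩,
        ⟨x, ⟨hxK, ball_subset_closedBall hxball⟩, rfl⟩⟩
  -- the bad set of translation vectors
  set G : Set (Set (EuclideanSpace ℝ (Fin n))) :=
    Set.image2 (fun a s => (fun z => a - z) '' s) A F with hGdef
  have hGcount : G.Countable := hA.image2 hFcount _
  have hhomeo : ∀ a : EuclideanSpace ℝ (Fin n),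
      (fun z : EuclideanSpace ℝ (Fin n) => a - z) =
        ((Homeomorph.neg (EuclideanSpace ℝ (Fin n))).trans (Homeomorph.addLeft a)) := by
    intro a; funext z; simp [sub_eq_add_neg]
  have hGclosed : ∀ g ∈ G, IsClosed g := by
    rintro - ⟨a, ha, s, hs, rfl⟩
    show IsClosed ((fun z => a - z) '' s)
    rw [hhomeo a]
    exact (Homeomorph.isClosed_image _).2 (hFclosed s hs)
  have hGint : ∀ g ∈ G, interior g = ∅ := by
    rintro - ⟨a, ha, s, hs, rfl⟩
    show interior ((fun z => a - z) '' s) = ∅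
    rw [hhomeo a, ← Homeomorph.image_interior, hFint s hs, image_empty]
  have hdense : Dense (⋂ g ∈ G, gᶜ) :=
    dense_biInter_of_isOpen (fun g hg => (hGclosed g hg).isOpen_compl) hGcount
      (fun g hg => interior_eq_empty_iff_dense_compl.1 (hGint g hg))
  obtain ⟨c, hcD, hcball⟩ :=
    hdense.exists_mem_open isOpen_ball ⟨0, mem_ball_self (half_pos hε)⟩
  have hcnorm : ‖c‖ < ε / 2 := by simpa using mem_ball_zero_iff.1 hcball
  refine ⟨fun i => q i + MvPolynomial.C (c i), ?_, ?_⟩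
  · intro x hx hmem
    have hpt : (show EuclideanSpace ℝ (Fin n) from
        WithLp.toLp 2 (fun i => MvPolynomial.eval x (q i + MvPolynomial.C (c i)))) = Q x + c := by
      refine PiLp.ext fun i => ?_
      show MvPolynomial.eval x (q i + MvPolynomial.C (c i)) = Q x i + c i
      rw [map_add, MvPolynomial.eval_C]
    rw [hpt] at hmem
    obtain ⟨s, hs, hQxs⟩ := hcover ⟨x, hx, rfl⟩
    have hg : ((fun z => (Q x + c) - z) '' s) ∈ G := mem_image2_of_mem hmem hs
    have hcin : c ∈ (fun z => (Q x + c) - z) '' s := ⟨Q x, hQxs, add_sub_cancel_left _ _⟩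
    have := mem_iInter₂.1 hcD _ hg
    exact this hcin
  · intro x hx
    have hpt : (show EuclideanSpace ℝ (Fin n) from
        WithLp.toLp 2 (fun i => MvPolynomial.eval x (q i + MvPolynomial.C (c i)))) = Q x + c := by
      refine PiLp.ext fun i => ?_
      show MvPolynomial.eval x (q i + MvPolynomial.C (c i)) = Q x i + c i
      rw [map_add, MvPolynomial.eval_C]
    rw [hpt]
    calc ‖f x - (Q x + c)‖ = ‖(f x - Q x) - c‖ := by rw [sub_add_eq_sub_sub]
      _ ≤ ‖f x - Q x‖ + ‖c‖ := norm_sub_le _ _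
      _ < ε / 2 + ε / 2 := by
          have := hQapprox x hx
          linarith
      _ = ε := by ring

end
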